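/- The functions g₁(t) = (1+4t)^{1/2} and g₃(t) = 1 defined on (-1/4, ∞) satisfy the ODE system g₁' = (a² + g₃²)/(g₁ g₃), g₃' = (a² - g₃²)/g₁² with a = 1 and initial conditions g₁(0) = g₃(0) = 1. -/

import Mathlib

/-- The functions `g₁(t) = (1+4t)^(1/2)` and `g₃(t) = 1` on `(-1/4, ∞)` solve the
generalized Ricci flow system `g₁' = (a² + g₃²)/(g₁ g₃)`, `g₃' = (a² - g₃²)/g₁²`
with `a = 1` and `g₁(0) = g₃(0) = 1`. -/
theorem stmt4 :
    ∃ (a : ℝ) (g₁ g₃ : ℝ → ℝ), a = 1 ∧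
      (g₁ = fun t : ℝ => (1 + 4 * t) ^ ((1/2 : ℝ))) ∧
      (g₃ = fun _ : ℝ => 1) ∧
      g₁ 0 = 1 ∧ g₃ 0 = 1 ∧
      ∀ t : ℝ, -(1/4) < t →
        HasDerivAt g₁ ((a ^ 2 + g₃ t ^ 2) / (g₁ t * g₃ t)) t ∧
        HasDerivAt g₃ ((a ^ 2 - g₃ t ^ 2) / g₁ t ^ 2) t := by
  refine ⟨1, _, _, rfl, rfl, rfl, by norm_num, rfl, fun t ht => ?_⟩
  have hpos : (0:ℝ) < 1 + 4 * t := by linarith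
  constructor
  · have h1 : HasDerivAt (fun t : ℝ => 1 + 4 * t) 4 t := by
      simpa using ((hasDerivAt_id t).const_mul 4).const_add 1
    have h2 := (Real.hasDerivAt_rpow_const (p := (1/2:ℝ)) (Or.inl hpos.ne')).comp t h1
    refine h2.congr_deriv ?_
    symm
    beta_reduce
    rw [div_eq_iff (by positivity)]
    have : (1 + 4 * t) ^ ((1/2:ℝ) - 1) * (1 + 4 * t) ^ ((1/2:ℝ)) = 1 := by
      rw [← Real.rpow_add hpos]; norm_num
    calc ((1:ℝ) ^ 2 + 1 ^ 2) = 2 * ((1 + 4 * t) ^ ((1/2:ℝ) - 1) * (1 + 4 * t) ^ ((1/2:ℝ))) := by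
          rw [this]; norm_num
      _ = (1/2:ℝ) * (1 + 4 * t) ^ ((1/2:ℝ) - 1) * 4 * ((1 + 4 * t) ^ ((1/2:ℝ)) * 1) := by ring
  · have : ((1:ℝ) ^ 2 - 1 ^ 2) / ((1 + 4 * t) ^ ((1/2:ℝ))) ^ 2 = 0 := by norm_num
    rw [this]
    exact hasDerivAt_const t 1
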